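/- Let p be a prime, G a commutative group in which every element x satisfies x^p = 1 (so that exponentiation g^a by a ∈ ℤ/pℤ is well defined), and h ∈ G. Let t ≥ 1, let v, w₁, w₂ be polynomials over ℤ/pℤ of degree < t, let m₁, m₂ ∈ ℤ/pℤ, and let S be a finite subset of (ℤ/pℤ) \ {0} with |S| = t. For each i ∈ S define the Lagrange coefficient l_i = ∏_{j ∈ S, j ≠ i} (0 − j)·(i − j)⁻¹ and the partial signature s_i = h^{v(i) + w₁(i)·m₁ + w₂(i)·m₂}. Then ∏_{i ∈ S} s_i^{l_i} = h^{v(0) + w₁(0)·m₁ + w₂(0)·m₂}. -/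

import Mathlib

/-- Exponentiation of a group element by an element of `ZMod p`
(well defined as a homomorphism in the exponent when the group has exponent `p`). -/
def zpowZMod {G : Type*} [Monoid G] {p : ℕ} (g : G) (a : ZMod p) : G := g ^ a.val

section aux

variable {G : Type*} [CommGroup G] {p : ℕ}

lemma pow_mod_p (hG : ∀ x : G, x ^ p = 1) (g : G) (n : ℕ) : g ^ n = g ^ (n % p) := by
  conv_lhs => rw [← Nat.mod_add_div n p, pow_add, pow_mul, hG, one_pow, mul_one]

lemma zpowZMod_add [NeZero p] (hG : ∀ x : G, x ^ p = 1) (g : G) (a b : ZMod p) :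
    zpowZMod g (a + b) = zpowZMod g a * zpowZMod g b := by
  simp only [zpowZMod, ZMod.val_add, ← pow_add]
  exact (pow_mod_p hG g _).symm

lemma zpowZMod_mul [NeZero p] (hG : ∀ x : G, x ^ p = 1) (g : G) (a b : ZMod p) :
    zpowZMod (zpowZMod g a) b = zpowZMod g (a * b) := by
  simp only [zpowZMod, ZMod.val_mul, ← pow_mul]
  exact pow_mod_p hG g _

lemma zpowZMod_sum [NeZero p] (hG : ∀ x : G, x ^ p = 1) (g : G) {ι : Type*}
    (S : Finset ι) (c : ι → ZMod p) :
    ∏ i ∈ S, zpowZMod g (c i) = zpowZMod g (∑ i ∈ S, c i) := by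
  classical
  induction S using Finset.induction_on with
  | empty => simp [zpowZMod]
  | @insert x S hx ih =>
      rw [Finset.prod_insert hx, Finset.sum_insert hx, zpowZMod_add hG, ih]

end aux

/-- Correctness of threshold aggregation (cecCreateWallet): the Lagrange-weighted product of
partial Pointcheval–Sanders shares equals the signature under the master secret key. -/
theorem create_wallet_aggregation_correctness
    {p : ℕ} (hp : p.Prime) {G : Type*} [CommGroup G]
    (hG : ∀ x : G, x ^ p = 1)
    (h : G) (t : ℕ) (ht : 1 ≤ t)
    (v w₁ w₂ : Polynomial (ZMod p))
    (hv : v.degree < (t : WithBot ℕ))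
    (hw₁ : w₁.degree < (t : WithBot ℕ))
    (hw₂ : w₂.degree < (t : WithBot ℕ))
    (m₁ m₂ : ZMod p)
    (S : Finset (ZMod p)) (hS0 : (0 : ZMod p) ∉ S) (hScard : S.card = t)
    (l : ZMod p → ZMod p)
    (hl : ∀ i ∈ S, l i = ∏ j ∈ S.erase i, (0 - j) * (i - j)⁻¹)
    (s : ZMod p → G)
    (hs : ∀ i ∈ S, s i = zpowZMod h (v.eval i + w₁.eval i * m₁ + w₂.eval i * m₂)) :
    ∏ i ∈ S, zpowZMod (s i) (l i)
      = zpowZMod h (v.eval 0 + w₁.eval 0 * m₁ + w₂.eval 0 * m₂) := by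
  haveI : Fact p.Prime := ⟨hp⟩
  set f : Polynomial (ZMod p) := v + Polynomial.C m₁ * w₁ + Polynomial.C m₂ * w₂ with hf
  have hfeval : ∀ x, f.eval x = v.eval x + w₁.eval x * m₁ + w₂.eval x * m₂ := by
    intro x; simp [hf]; ring
  have hfdeg : f.degree < (S.card : WithBot ℕ) := by
    rw [hScard]
    refine lt_of_le_of_lt (Polynomial.degree_add_le _ _) (max_lt ?_ ?_)
    · refine lt_of_le_of_lt (Polynomial.degree_add_le _ _) (max_lt hv ?_)
      exact lt_of_le_of_lt ((Polynomial.degree_mul_le _ _).trans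
        (by simpa using add_le_add_left Polynomial.degree_C_le w₁.degree)) hw₁
    · exact lt_of_le_of_lt ((Polynomial.degree_mul_le _ _).trans
        (by simpa using add_le_add_left Polynomial.degree_C_le w₂.degree)) hw₂
  -- Lagrange interpolation identity at 0
  have hinj : Set.InjOn (id : ZMod p → ZMod p) S := Function.injective_id.injOn
  have hinterp := Lagrange.eq_interpolate (f := f) hinj hfdeg
  have key : f.eval 0 = ∑ i ∈ S, f.eval i * l i := by
    conv_lhs => rw [hinterp]
    rw [Lagrange.interpolate_apply, Polynomial.eval_finset_sum]
    refine Finset.sum_congr rfl fun i hi => ?_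
    rw [hl i hi, Polynomial.eval_mul, Polynomial.eval_C]
    congr 1
    rw [Lagrange.basis, Polynomial.eval_prod, ← Finset.prod_congr rfl
      (fun j hj => rfl)]
    refine Finset.prod_congr rfl fun j hj => ?_
    simp only [Lagrange.basisDivisor, Polynomial.eval_mul, Polynomial.eval_C,
      Polynomial.eval_sub, Polynomial.eval_X, id]
    rw [zero_sub, mul_comm]
  calc ∏ i ∈ S, zpowZMod (s i) (l i)
      = ∏ i ∈ S, zpowZMod h (f.eval i * l i) := by
        refine Finset.prod_congr rfl fun i hi => ?_
        rw [hs i hi, zpowZMod_mul hG, ← hfeval]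
    _ = zpowZMod h (∑ i ∈ S, f.eval i * l i) := zpowZMod_sum hG h S _
    _ = zpowZMod h (f.eval 0) := by rw [← key]
    _ = _ := by rw [hfeval]
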